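/- Let X : Ω → ℝⁿ and ε : Ω → ℝᵐ be square-integrable random vectors on a probability space, with X and ε independent and E[ε] = 0. Let F ∈ ℝ^{m×n}, set Y = F X + ε, Γ_X = E[X Xᵀ], Γ_Y = E[Y Yᵀ], and suppose L_Y ∈ ℝ^{m×p} has full column rank p with Γ_Y = L_Y L_Yᵀ. Let C = Γ_X Fᵀ (L_Y†)ᵀ. Then for every A ∈ ℝ^{n×m}, E‖A Y − X‖₂² = ‖A L_Y − C‖_F² − ‖C‖_F² + tr(Γ_X). -/

import Mathlib

open Matrix MeasureTheory
open scoped ENNReal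

/-- Second (cross-)moment matrix `E[X Yᵀ]` of two random vectors. -/
noncomputable def secondMoment {Ω : Type} [MeasurableSpace Ω] (μ : Measure Ω)
    {n m : ℕ} (X : Ω → Fin n → ℝ) (Y : Ω → Fin m → ℝ) : Matrix (Fin n) (Fin m) ℝ :=
  Matrix.of fun i j => ∫ ω, X ω i * Y ω j ∂μ

/-- Frobenius norm of a real matrix. -/
noncomputable def frob {m n : ℕ} (A : Matrix (Fin m) (Fin n) ℝ) : ℝ :=
  Real.sqrt (∑ i, ∑ j, (A i j) ^ 2)

/-- `Ad` is the Moore–Penrose pseudoinverse of `A` (the four Penrose conditions). -/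
def IsMoorePenrose {m n : ℕ} (A : Matrix (Fin m) (Fin n) ℝ)
    (Ad : Matrix (Fin n) (Fin m) ℝ) : Prop :=
  A * Ad * A = A ∧ Ad * A * Ad = Ad ∧ (A * Ad)ᵀ = A * Ad ∧ (Ad * A)ᵀ = Ad * A

section helpers
variable {Ω : Type} [MeasurableSpace Ω] {μ : Measure Ω}

lemma int_mul {u v : Ω → ℝ} (hu : MemLp u 2 μ) (hv : MemLp v 2 μ) :
    Integrable (fun ω => u ω * v ω) μ := by
  have h : (1:ℝ≥0∞)/1 = 1/2 + 1/2 := by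
    rw [ENNReal.div_add_div_same, one_div_one, one_add_one_eq_two,
      ENNReal.div_self two_ne_zero ENNReal.ofNat_ne_top]
  have := hv.smul (r := 1) hu (hpqr := ⟨by simpa only [one_div] using h.symm⟩)
  rw [memLp_one_iff_integrable] at this
  exact this

lemma coord {a : ℕ} {U : Ω → Fin a → ℝ} (hU : MemLp U 2 μ) (i : Fin a) :
    MemLp (fun ω => U ω i) 2 μ := by
  have := (ContinuousLinearMap.proj (R := ℝ) (φ := fun _ : Fin a => ℝ) i).comp_memLp' hU
  exact this

lemma mulvec_mem {a b : ℕ} {U : Ω → Fin a → ℝ} (hU : MemLp U 2 μ)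
    (M : Matrix (Fin b) (Fin a) ℝ) : MemLp (fun ω => M *ᵥ U ω) 2 μ := by
  have := (LinearMap.toContinuousLinearMap M.mulVecLin).comp_memLp' hU
  exact this

lemma sm_transpose {a b : ℕ} (U : Ω → Fin a → ℝ) (V : Ω → Fin b → ℝ) :
    (secondMoment μ U V)ᵀ = secondMoment μ V U := by
  ext i j
  simp [secondMoment, Matrix.transpose_apply, mul_comm]

lemma sm_mul_left {a b c : ℕ} {U : Ω → Fin a → ℝ} {V : Ω → Fin b → ℝ}
    (hU : MemLp U 2 μ) (hV : MemLp V 2 μ) (M : Matrix (Fin c) (Fin a) ℝ) :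
    secondMoment μ (fun ω => M *ᵥ U ω) V = M * secondMoment μ U V := by
  ext i j
  simp only [secondMoment, Matrix.mul_apply, Matrix.of_apply, Matrix.mulVec, dotProduct]
  rw [show (fun ω => (∑ k, M i k * U ω k) * V ω j)
      = fun ω => ∑ k, M i k * (U ω k * V ω j) by
    funext ω; rw [Finset.sum_mul]; exact Finset.sum_congr rfl fun k _ => mul_assoc _ _ _]
  rw [integral_finset_sum]
  · exact Finset.sum_congr rfl fun k _ => integral_const_mul _ _
  · exact fun k _ => (int_mul (coord hU k) (coord hV j)).const_mul _

lemma sm_mul_right {a b c : ℕ} {U : Ω → Fin a → ℝ} {V : Ω → Fin b → ℝ}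
    (hU : MemLp U 2 μ) (hV : MemLp V 2 μ) (M : Matrix (Fin c) (Fin b) ℝ) :
    secondMoment μ U (fun ω => M *ᵥ V ω) = secondMoment μ U V * Mᵀ := by
  have := congrArg Matrix.transpose (sm_mul_left hV hU M)
  rw [sm_transpose, Matrix.transpose_mul, sm_transpose] at this
  exact this

lemma sm_add_left {a b : ℕ} {U V : Ω → Fin a → ℝ} {W : Ω → Fin b → ℝ}
    (hU : MemLp U 2 μ) (hV : MemLp V 2 μ) (hW : MemLp W 2 μ) :
    secondMoment μ (fun ω => U ω + V ω) W
      = secondMoment μ U W + secondMoment μ V W := by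
  ext i j
  simp only [secondMoment, Matrix.of_apply, Matrix.add_apply, Pi.add_apply, add_mul]
  exact integral_add (int_mul (coord hU i) (coord hW j)) (int_mul (coord hV i) (coord hW j))

lemma sm_add_right {a b : ℕ} {U : Ω → Fin a → ℝ} {V W : Ω → Fin b → ℝ}
    (hU : MemLp U 2 μ) (hV : MemLp V 2 μ) (hW : MemLp W 2 μ) :
    secondMoment μ U (fun ω => V ω + W ω)
      = secondMoment μ U V + secondMoment μ U W := by
  have := congrArg Matrix.transpose (sm_add_left hV hW hU)
  rw [sm_transpose, Matrix.transpose_add, sm_transpose, sm_transpose] at this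
  exact this

lemma sm_sub_left {a b : ℕ} {U V : Ω → Fin a → ℝ} {W : Ω → Fin b → ℝ}
    (hU : MemLp U 2 μ) (hV : MemLp V 2 μ) (hW : MemLp W 2 μ) :
    secondMoment μ (fun ω => U ω - V ω) W
      = secondMoment μ U W - secondMoment μ V W := by
  ext i j
  simp only [secondMoment, Matrix.of_apply, Matrix.sub_apply, Pi.sub_apply, sub_mul]
  exact integral_sub (int_mul (coord hU i) (coord hW j)) (int_mul (coord hV i) (coord hW j))

lemma sm_sub_right {a b : ℕ} {U : Ω → Fin a → ℝ} {V W : Ω → Fin b → ℝ}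
    (hU : MemLp U 2 μ) (hV : MemLp V 2 μ) (hW : MemLp W 2 μ) :
    secondMoment μ U (fun ω => V ω - W ω)
      = secondMoment μ U V - secondMoment μ U W := by
  have := congrArg Matrix.transpose (sm_sub_left hV hW hU)
  rw [sm_transpose, Matrix.transpose_sub, sm_transpose, sm_transpose] at this
  exact this

lemma sm_diag_nonneg {a : ℕ} (U : Ω → Fin a → ℝ) (i : Fin a) :
    0 ≤ secondMoment μ U U i i :=
  integral_nonneg fun ω => mul_self_nonneg _

lemma sm_row_zero {a b : ℕ} {U : Ω → Fin a → ℝ} {V : Ω → Fin b → ℝ}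
    (hU : MemLp U 2 μ) (i : Fin a)
    (h : secondMoment μ U U i i = 0) (j : Fin b) :
    secondMoment μ U V i j = 0 := by
  have hint : Integrable (fun ω => U ω i * U ω i) μ := int_mul (coord hU i) (coord hU i)
  have h0 : (fun ω => U ω i * U ω i) =ᵐ[μ] 0 := by
    rw [← integral_eq_zero_iff_of_nonneg (fun ω => mul_self_nonneg _) hint]
    exact h
  have hU0 : (fun ω => U ω i) =ᵐ[μ] 0 := by
    filter_upwards [h0] with ω hω
    exact mul_self_eq_zero.mp hω
  have hz : (fun ω => U ω i * V ω j) =ᵐ[μ] 0 := by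
    filter_upwards [hU0] with ω hω
    simp only [Pi.zero_apply] at hω ⊢
    rw [hω, zero_mul]
  exact integral_eq_zero_of_ae hz

lemma frob_sq {a b : ℕ} (M : Matrix (Fin a) (Fin b) ℝ) :
    frob M ^ 2 = Matrix.trace (M * Mᵀ) := by
  rw [frob, Real.sq_sqrt (by positivity)]
  simp [Matrix.trace, Matrix.diag, Matrix.mul_apply, sq]

end helpers

theorem inverse_risk_completed_square {Ω : Type} [MeasurableSpace Ω]
    (μ : Measure Ω) [IsProbabilityMeasure μ] {n m p : ℕ}
    (X : Ω → Fin n → ℝ) (ε : Ω → Fin m → ℝ)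
    (hX : MemLp X 2 μ) (hε : MemLp ε 2 μ)
    (hindep : ProbabilityTheory.IndepFun X ε μ)
    (hmean : (∫ ω, ε ω ∂μ) = 0)
    (F : Matrix (Fin m) (Fin n) ℝ)
    (LY : Matrix (Fin m) (Fin p) ℝ) (hLYrank : LY.rank = p)
    (hLY : secondMoment μ (fun ω => F *ᵥ X ω + ε ω) (fun ω => F *ᵥ X ω + ε ω)
        = LY * LYᵀ)
    (LYd : Matrix (Fin p) (Fin m) ℝ) (hLYd : IsMoorePenrose LY LYd)
    (A : Matrix (Fin n) (Fin m) ℝ) :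
    ∫ ω, ∑ i, (A *ᵥ (F *ᵥ X ω + ε ω) - X ω) i ^ 2 ∂μ
      = frob (A * LY - secondMoment μ X X * Fᵀ * LYdᵀ) ^ 2
          - frob (secondMoment μ X X * Fᵀ * LYdᵀ) ^ 2
          + Matrix.trace (secondMoment μ X X) := by
  obtain ⟨hP1, hP2, hP3, hP4⟩ := hLYd
  -- notation
  have hΓsymm : (secondMoment μ X X)ᵀ = secondMoment μ X X := sm_transpose X X
  -- memberships
  have hZ : MemLp (fun ω => F *ᵥ X ω) 2 μ := mulvec_mem hX F
  have hY : MemLp (fun ω => F *ᵥ X ω + ε ω) 2 μ := hZ.add hε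
  -- E[X εᵀ] = 0
  have hXε : secondMoment μ X ε = 0 := by
    ext i j
    have hij : ProbabilityTheory.IndepFun (fun ω => X ω i) (fun ω => ε ω j) μ :=
      hindep.comp (measurable_pi_apply i) (measurable_pi_apply j)
    have h1 : Integrable (fun ω => X ω i) μ := (coord hX i).integrable one_le_two
    have h2 : Integrable (fun ω => ε ω j) μ := (coord hε j).integrable one_le_two
    have hεj : (∫ ω, ε ω j ∂μ) = 0 := by
      have hc := (ContinuousLinearMap.proj (R := ℝ)
        (φ := fun _ : Fin m => ℝ) j).integral_comp_comm (hε.integrable one_le_two)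
      simp only [ContinuousLinearMap.proj_apply] at hc
      rw [hc, hmean]
      rfl
    have h3 : (∫ ω, X ω i * ε ω j ∂μ)
        = (∫ ω, X ω i ∂μ) * ∫ ω, ε ω j ∂μ := hij.integral_mul_eq_mul_integral h1.aestronglyMeasurable h2.aestronglyMeasurable
    show (∫ ω, X ω i * ε ω j ∂μ) = 0
    rw [h3, hεj, mul_zero]
  have hεX : secondMoment μ ε X = 0 := by
    rw [← sm_transpose, hXε, Matrix.transpose_zero]
  -- E[Z Xᵀ] = F Γ
  have hZX : secondMoment μ (fun ω => F *ᵥ X ω) X = F * secondMoment μ X X :=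
    sm_mul_left hX hX F
  have hZε : secondMoment μ (fun ω => F *ᵥ X ω) ε = 0 := by
    rw [sm_mul_left hX hε F, hXε, Matrix.mul_zero]
  have hεZ : secondMoment μ ε (fun ω => F *ᵥ X ω) = 0 := by
    rw [← sm_transpose, hZε, Matrix.transpose_zero]
  -- Γ_Y decomposition
  have hYY : secondMoment μ (fun ω => F *ᵥ X ω + ε ω) (fun ω => F *ᵥ X ω + ε ω)
      = secondMoment μ (fun ω => F *ᵥ X ω) (fun ω => F *ᵥ X ω)
        + secondMoment μ ε ε := by
    rw [sm_add_left hZ hε hY, sm_add_right hZ hZ hε, sm_add_right hε hZ hε, hZε, hεZ,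
      add_zero, zero_add]
  -- the projection Q := 1 - LY LYd
  have hQsymm : (1 - LY * LYd)ᵀ = 1 - LY * LYd := by
    rw [Matrix.transpose_sub, Matrix.transpose_one, hP3]
  have hQGY : (1 - LY * LYd) * (LY * LYᵀ) = 0 := by
    rw [Matrix.sub_mul, Matrix.one_mul, ← Matrix.mul_assoc, hP1, sub_self]
  -- key: LY LYd F Γ = F Γ
  have hkey : LY * LYd * (F * secondMoment μ X X) = F * secondMoment μ X X := by
    set Q : Matrix (Fin m) (Fin m) ℝ := 1 - LY * LYd with hQdef
    have hQZ : MemLp (fun ω => Q *ᵥ (F *ᵥ X ω)) 2 μ := mulvec_mem hZ Q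
    have hQε : MemLp (fun ω => Q *ᵥ ε ω) 2 μ := mulvec_mem hε Q
    have hsmZ : secondMoment μ (fun ω => Q *ᵥ (F *ᵥ X ω)) (fun ω => Q *ᵥ (F *ᵥ X ω))
        = Q * secondMoment μ (fun ω => F *ᵥ X ω) (fun ω => F *ᵥ X ω) * Qᵀ := by
      rw [sm_mul_left hZ hQZ Q, sm_mul_right hZ hZ Q, Matrix.mul_assoc]
    have hsmε : secondMoment μ (fun ω => Q *ᵥ ε ω) (fun ω => Q *ᵥ ε ω)
        = Q * secondMoment μ ε ε * Qᵀ := by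
      rw [sm_mul_left hε hQε Q, sm_mul_right hε hε Q, Matrix.mul_assoc]
    have hsum : Q * secondMoment μ (fun ω => F *ᵥ X ω) (fun ω => F *ᵥ X ω) * Qᵀ
        + Q * secondMoment μ ε ε * Qᵀ = 0 := by
      rw [← Matrix.add_mul, ← Matrix.mul_add, ← hYY, hLY, hQGY, Matrix.zero_mul]
    have hdiag : ∀ i, secondMoment μ (fun ω => Q *ᵥ (F *ᵥ X ω))
        (fun ω => Q *ᵥ (F *ᵥ X ω)) i i = 0 := by
      intro i
      have h0 : secondMoment μ (fun ω => Q *ᵥ (F *ᵥ X ω)) (fun ω => Q *ᵥ (F *ᵥ X ω)) i i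
          + secondMoment μ (fun ω => Q *ᵥ ε ω) (fun ω => Q *ᵥ ε ω) i i = 0 := by
        rw [hsmZ, hsmε]
        have := congrFun (congrFun hsum i) i
        simpa using this
      have ha := sm_diag_nonneg (μ := μ) (fun ω => Q *ᵥ (F *ᵥ X ω)) i
      have hb := sm_diag_nonneg (μ := μ) (fun ω => Q *ᵥ ε ω) i
      linarith
    have hQZX : secondMoment μ (fun ω => Q *ᵥ (F *ᵥ X ω)) X = 0 := by
      ext i j
      exact sm_row_zero hQZ i (hdiag i) j
    rw [sm_mul_left hZ hX Q, hZX] at hQZX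
    rw [hQdef, Matrix.sub_mul, Matrix.one_mul, sub_eq_zero] at hQZX
    exact hQZX.symm
  -- residual
  have hAY : MemLp (fun ω => A *ᵥ (F *ᵥ X ω + ε ω)) 2 μ := mulvec_mem hY A
  have hR : MemLp (fun ω => A *ᵥ (F *ᵥ X ω + ε ω) - X ω) 2 μ := hAY.sub hX
  have hLHS : (∫ ω, ∑ i, (A *ᵥ (F *ᵥ X ω + ε ω) - X ω) i ^ 2 ∂μ)
      = Matrix.trace (secondMoment μ (fun ω => A *ᵥ (F *ᵥ X ω + ε ω) - X ω)
          (fun ω => A *ᵥ (F *ᵥ X ω + ε ω) - X ω)) := by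
    rw [integral_finset_sum]
    · rw [Matrix.trace]
      refine Finset.sum_congr rfl fun i _ => ?_
      show (∫ ω, (A *ᵥ (F *ᵥ X ω + ε ω) - X ω) i ^ 2 ∂μ) = ∫ ω, _ * _ ∂μ
      congr 1
      funext ω
      rw [sq]
    · intro i _
      have := int_mul (coord hR i) (coord hR i)
      simpa [sq] using this
  rw [hLHS]
  -- second moment of residual
  have hYX : secondMoment μ (fun ω => F *ᵥ X ω + ε ω) X = F * secondMoment μ X X := by
    rw [sm_add_left hZ hε hX, hZX, hεX, add_zero]
  have hXY : secondMoment μ X (fun ω => F *ᵥ X ω + ε ω) = secondMoment μ X X * Fᵀ := by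
    rw [← sm_transpose, hYX, Matrix.transpose_mul, hΓsymm]
  have hRR : secondMoment μ (fun ω => A *ᵥ (F *ᵥ X ω + ε ω) - X ω)
        (fun ω => A *ᵥ (F *ᵥ X ω + ε ω) - X ω)
      = A * (LY * LYᵀ) * Aᵀ - A * (F * secondMoment μ X X)
        - secondMoment μ X X * Fᵀ * Aᵀ + secondMoment μ X X := by
    rw [sm_sub_left hAY hX hR, sm_sub_right hAY hAY hX, sm_sub_right hX hAY hX,
      sm_mul_left hY hAY A, sm_mul_right hY hY A, sm_mul_left hY hX A,
      sm_mul_right hX hY A, hLY, hYX, hXY]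
    rw [← Matrix.mul_assoc A (LY * LYᵀ) Aᵀ]
    noncomm_ring
  rw [hRR]
  -- final matrix algebra
  have hCT : (secondMoment μ X X * Fᵀ * LYdᵀ)ᵀ = LYd * (F * secondMoment μ X X) := by
    rw [Matrix.transpose_mul, Matrix.transpose_mul, Matrix.transpose_transpose,
      Matrix.transpose_transpose, hΓsymm]
  have hLC : LY * (secondMoment μ X X * Fᵀ * LYdᵀ)ᵀ = F * secondMoment μ X X := by
    rw [hCT, ← Matrix.mul_assoc, hkey]
  have hCL : (secondMoment μ X X * Fᵀ * LYdᵀ) * LYᵀ = secondMoment μ X X * Fᵀ := by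
    have := congrArg Matrix.transpose hLC
    rw [Matrix.transpose_mul, Matrix.transpose_transpose, Matrix.transpose_mul, hΓsymm]
      at this
    rw [this]
  rw [frob_sq, frob_sq]
  have hexp : (A * LY - secondMoment μ X X * Fᵀ * LYdᵀ)
        * (A * LY - secondMoment μ X X * Fᵀ * LYdᵀ)ᵀ
      = A * (LY * LYᵀ) * Aᵀ - A * (F * secondMoment μ X X)
        - secondMoment μ X X * Fᵀ * Aᵀ
        + (secondMoment μ X X * Fᵀ * LYdᵀ) * (secondMoment μ X X * Fᵀ * LYdᵀ)ᵀ := by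
    rw [Matrix.transpose_sub, Matrix.sub_mul, Matrix.mul_sub, Matrix.mul_sub,
      Matrix.transpose_mul]
    rw [show A * LY * (secondMoment μ X X * Fᵀ * LYdᵀ)ᵀ
        = A * (F * secondMoment μ X X) by rw [Matrix.mul_assoc, hLC]]
    rw [show (secondMoment μ X X * Fᵀ * LYdᵀ) * (LYᵀ * Aᵀ)
        = secondMoment μ X X * Fᵀ * Aᵀ by rw [← Matrix.mul_assoc, hCL]]
    rw [← Matrix.mul_assoc (A * LY) LYᵀ Aᵀ, Matrix.mul_assoc A LY LYᵀ]
    abel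
  rw [hexp]
  simp only [Matrix.trace_add, Matrix.trace_sub]
  ring
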